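/- Let b ≥ 2 be an integer and k an integer with 1 ≤ k ≤ b − 1. There is no finite set S of primes and no infinite strictly increasing sequence (n_i) such that every number k·(b^{n_i} − 1)/(b−1) has all its prime factors in S. -/

import Mathlib

theorem myGeom (b n : ℕ) (hb : 1 ≤ b) :
    (b - 1) * ∑ j ∈ Finset.range n, b ^ j = b ^ n - 1 := by
  have h1 : (1:ℕ) ≤ b ^ n := Nat.one_le_pow _ _ hb
  zify [hb, h1]
  rw [mul_comm]
  exact geom_sum_mul (b:ℤ) n

theorem myValBound (p b n : ℕ) (hp : p.Prime) (hb : 2 ≤ b) (hn : 1 ≤ n) :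
    p ^ (padicValNat p (b ^ n - 1)) ≤ b ^ (2 * p) * n := by
  haveI : Fact p.Prime := ⟨hp⟩
  have hp2 := hp.two_le
  have hRpos : 1 ≤ b ^ (2*p) * n := Nat.one_le_iff_ne_zero.mpr (by positivity)
  by_cases hdvd : p ∣ b ^ n - 1
  swap
  · rw [padicValNat.eq_zero_of_not_dvd hdvd]; simpa using hRpos
  have hbn1 : (1:ℕ) ≤ b ^ n := Nat.one_le_pow _ _ (by omega)
  have hpb : ¬ p ∣ b := by
    intro h
    have h2 : p ∣ b ^ n := h.trans (dvd_pow_self b (by omega))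
    have h3 : p ∣ 1 := by
      have := Nat.dvd_sub h2 hdvd
      rwa [Nat.sub_sub_self hbn1] at this
    exact hp.one_lt.ne' (Nat.dvd_one.mp h3)
  rcases hp.eq_two_or_odd' with rfl | hodd
  · -- p = 2
    have hbodd : ¬ 2 ∣ b := hpb
    by_cases hne : Even n
    · -- n even : use LTE for 2
      have h2b1 : 2 ∣ b - 1 := by omega
      have key := padicValNat.pow_two_sub_pow (x := b) (y := 1) (by omega) (by simpa using h2b1)
        hbodd (n := n) (by omega) hne
      simp only [one_pow] at key
      have e1 : 2 ^ (padicValNat 2 (b + 1)) ≤ b + 1 :=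
        Nat.le_of_dvd (by omega) pow_padicValNat_dvd
      have e2 : 2 ^ (padicValNat 2 (b - 1)) ≤ b - 1 :=
        Nat.le_of_dvd (by omega) pow_padicValNat_dvd
      have e3 : 2 ^ (padicValNat 2 n) ≤ n := Nat.le_of_dvd (by omega) pow_padicValNat_dvd
      have : 2 ^ (padicValNat 2 (b ^ n - 1) + 1) ≤ (b + 1) * (b - 1) * n := by
        rw [key, pow_add, pow_add]
        exact Nat.mul_le_mul (Nat.mul_le_mul e1 e2) e3
      have hle : 2 ^ (padicValNat 2 (b ^ n - 1)) ≤ (b + 1) * (b - 1) * n := by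
        calc 2 ^ (padicValNat 2 (b ^ n - 1)) ≤ 2 ^ (padicValNat 2 (b ^ n - 1) + 1) :=
          Nat.pow_le_pow_right (by omega) (by omega)
        _ ≤ _ := this
      refine hle.trans ?_
      have hb2 : b + 1 ≤ b ^ 2 := by nlinarith
      have : (b + 1) * (b - 1) ≤ b ^ (2 * 2) := by
        calc (b + 1) * (b - 1) ≤ b ^ 2 * b := Nat.mul_le_mul hb2 (by omega)
        _ = b ^ 3 := by ring
        _ ≤ b ^ (2 * 2) := Nat.pow_le_pow_right (by omega) (by omega)
      exact Nat.mul_le_mul_right n this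
    · -- n odd : v_2(b^n - 1) = v_2(b-1) since sum is odd
      have hgeom := myGeom b n (by omega)
      have hmod : (∑ j ∈ Finset.range n, b ^ j) % 2 = n % 2 := by
        rw [Finset.sum_nat_mod]
        have each : ∀ j ∈ Finset.range n, b ^ j % 2 = 1 := by
          intro j _
          rw [Nat.pow_mod]
          have : b % 2 = 1 := by omega
          simp [this]
        rw [Finset.sum_congr rfl each]
        simp [Nat.mod_mod_of_dvd]
      have hSodd : ¬ 2 ∣ ∑ j ∈ Finset.range n, b ^ j := by
        rw [Nat.even_iff] at hne
        omega
      have hSpos : 0 < ∑ j ∈ Finset.range n, b ^ j := by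
        by_contra h
        push_neg at h
        interval_cases (∑ j ∈ Finset.range n, b ^ j)
        · simp at hgeom; omega
      have hv : padicValNat 2 (b ^ n - 1) = padicValNat 2 (b - 1) := by
        rw [← hgeom, padicValNat.mul (by omega) (by omega),
          padicValNat.eq_zero_of_not_dvd hSodd, add_zero]
      rw [hv]
      have h1 : 2 ^ (padicValNat 2 (b - 1)) ≤ b - 1 :=
        Nat.le_of_dvd (by omega) pow_padicValNat_dvd
      have h2 : b ≤ b ^ (2 * 2) := Nat.le_self_pow (by omega) b
      calc 2 ^ (padicValNat 2 (b - 1)) ≤ b - 1 := h1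
      _ ≤ b ^ (2 * 2) := le_trans (by omega) h2
      _ ≤ b ^ (2 * 2) * n := Nat.le_mul_of_pos_right _ (by omega)
  · -- odd p
    have hbz : (b : ZMod p) ≠ 0 := by
      rw [Ne, ZMod.natCast_eq_zero_iff]; exact hpb
    set d := orderOf (b : ZMod p) with hd
    have hdvd_iff : ∀ m, p ∣ b ^ m - 1 ↔ d ∣ m := by
      intro m
      have h1 : (1:ℕ) ≤ b ^ m := Nat.one_le_pow _ _ (by omega)
      rw [← ZMod.natCast_eq_zero_iff, Nat.cast_sub h1, Nat.cast_pow, Nat.cast_one,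
        sub_eq_zero]
      exact orderOf_dvd_iff_pow_eq_one.symm
    have hdp : d ∣ p - 1 := ZMod.orderOf_dvd_card_sub_one hbz
    have hdpos : 0 < d := by
      rcases Nat.eq_zero_or_pos d with h | h
      · exfalso; rw [h] at hdp; have := Nat.eq_zero_of_zero_dvd hdp; omega
      · exact h
    have hdle : d ≤ p - 1 := Nat.le_of_dvd (by omega) hdp
    obtain ⟨m, hm⟩ := (hdvd_iff n).mp hdvd
    have hmpos : 0 < m := Nat.pos_of_ne_zero (fun h0 => by rw [h0, mul_zero] at hm; omega)
    have hx1 : 1 < b ^ d := Nat.one_lt_pow (by omega) (by omega)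
    have hpx : ¬ p ∣ b ^ d := fun h => hpb (hp.dvd_of_dvd_pow h)
    have hpx1 : p ∣ b ^ d - 1 := (hdvd_iff d).mpr dvd_rfl
    have key := padicValNat.pow_sub_pow (p := p) hodd (x := b ^ d) (y := 1) hx1
      (by simpa using hpx1) hpx (n := m) (by omega)
    simp only [one_pow, ← pow_mul, ← hm] at key
    have e1 : p ^ (padicValNat p (b ^ d - 1)) ≤ b ^ d - 1 :=
      Nat.le_of_dvd (by omega) pow_padicValNat_dvd
    have e2 : p ^ (padicValNat p m) ≤ m := Nat.le_of_dvd hmpos pow_padicValNat_dvd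
    rw [key, pow_add]
    calc p ^ (padicValNat p (b ^ d - 1)) * p ^ (padicValNat p m) ≤ (b ^ d - 1) * m :=
        Nat.mul_le_mul e1 e2
    _ ≤ b ^ (2 * p) * n := by
        apply Nat.mul_le_mul
        · calc b ^ d - 1 ≤ b ^ d := Nat.sub_le _ _
          _ ≤ b ^ (2 * p) := Nat.pow_le_pow_right (by omega) (by omega)
        · calc m ≤ d * m := Nat.le_mul_of_pos_left _ hdpos
          _ = n := hm.symm

theorem mySumLB (b n : ℕ) (hb : 2 ≤ b) (hn : 1 ≤ n) :
    b ^ (n-1) ≤ ∑ j ∈ Finset.range n, b ^ j := by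
  apply Finset.single_le_sum (f := fun j => b ^ j) (fun i _ => Nat.zero_le _)
  simp only [Finset.mem_range]
  omega

theorem myGrowth (C s : ℕ) : ∃ M : ℕ, ∀ m ≥ M, C * m ^ s < 2 ^ (m - 1) := by
  have h := isLittleO_pow_const_const_pow_of_one_lt (R := ℝ) s (by norm_num : (1:ℝ) < 2)
  have hc : (0:ℝ) < 1 / (4 * (C + 1)) := by positivity
  have h2 := h.def hc
  rw [Filter.eventually_atTop] at h2
  obtain ⟨M, hM⟩ := h2
  refine ⟨max M 1, fun m hm => ?_⟩
  have hm1 : 1 ≤ m := le_trans (le_max_right _ _) hm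
  have key := hM m (le_trans (le_max_left _ _) hm)
  rw [Real.norm_of_nonneg (by positivity), Real.norm_of_nonneg (by positivity)] at key
  have hR : ((C : ℝ)) * (m:ℝ) ^ s < (2:ℝ) ^ (m - 1 : ℕ) := by
    have h3 : (2:ℝ) ^ (m - 1 : ℕ) = 2 ^ m / 2 := by
      rw [eq_div_iff (by norm_num), ← pow_succ]
      congr 1
      omega
    rw [h3]
    calc (C:ℝ) * (m:ℝ) ^ s ≤ (C + 1) * ((1 / (4 * (C + 1))) * 2 ^ m) := by
          apply mul_le_mul (by norm_num) key (by positivity) (by positivity)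
      _ = 2 ^ m / 4 := by field_simp
      _ < 2 ^ m / 2 := by
          apply div_lt_div_of_pos_left (by positivity) (by norm_num) (by norm_num)
  exact_mod_cast hR

theorem stmt_6 (b k : ℕ) (hb : 2 ≤ b) (hk1 : 1 ≤ k) (hkb : k ≤ b - 1) :
    ¬ ∃ (S : Finset ℕ) (n : ℕ → ℕ), (∀ p ∈ S, p.Prime) ∧ StrictMono n ∧ (∀ i, 0 < n i) ∧
      ∀ i p, p.Prime → p ∣ (k * ∑ j ∈ Finset.range (n i), b ^ j) → p ∈ S := by
  rintro ⟨S, n, hSp, hmono, hpos, hall⟩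
  set C := ∏ p ∈ S, b ^ (2 * p + 1) with hC
  set s := S.card with hs
  obtain ⟨M, hM⟩ := myGrowth C s
  set i := M with hi
  set m := n i with hm
  have hm1 : 1 ≤ m := hpos i
  have hmM : M ≤ m := le_trans hmono.le_apply (le_refl _)
  set N := k * ∑ j ∈ Finset.range m, b ^ j with hN
  have hSpos : 0 < ∑ j ∈ Finset.range m, b ^ j :=
    lt_of_lt_of_le (by positivity) (mySumLB b m hb hm1)
  have hNpos : 0 < N := by positivity
  -- lower bound
  have hlow : 2 ^ (m - 1) ≤ N := by
    calc 2 ^ (m - 1) ≤ b ^ (m - 1) := Nat.pow_le_pow_left hb _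
    _ ≤ ∑ j ∈ Finset.range m, b ^ j := mySumLB b m hb hm1
    _ ≤ N := Nat.le_mul_of_pos_left _ (by omega)
  -- upper bound
  have hbn1 : (1:ℕ) ≤ b ^ m := Nat.one_le_pow _ _ (by omega)
  have hKM : k * (b ^ m - 1) ≠ 0 := by
    have : (b:ℕ) ^ m - 1 ≠ 0 := by
      have : 2 ≤ b ^ m := le_trans hb (Nat.le_self_pow (by omega) b)
      omega
    positivity
  have hfac : ∀ p ∈ S, p ^ (N.factorization p) ≤ b ^ (2 * p + 1) * m := by
    intro p hpS
    have hp : p.Prime := hSp p hpS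
    haveI : Fact p.Prime := ⟨hp⟩
    have hdvd1 : (∑ j ∈ Finset.range m, b ^ j) ∣ b ^ m - 1 :=
      ⟨b - 1, by rw [← myGeom b m (by omega)]; ring⟩
    have hdvd2 : N ∣ k * (b ^ m - 1) := mul_dvd_mul_left k hdvd1
    have hv1 : padicValNat p N ≤ padicValNat p (k * (b ^ m - 1)) := by
      have : (p:ℕ) ^ padicValNat p N ∣ k * (b ^ m - 1) :=
        dvd_trans pow_padicValNat_dvd hdvd2
      have h := (padicValNat_dvd_iff_le hKM).mp this
      exact h
    rw [Nat.factorization_def _ hp]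
    calc p ^ padicValNat p N ≤ p ^ padicValNat p (k * (b ^ m - 1)) :=
          Nat.pow_le_pow_right hp.pos hv1
    _ = p ^ padicValNat p k * p ^ padicValNat p (b ^ m - 1) := by
          rw [padicValNat.mul (by omega) (by intro h; exact hKM (by rw [h, mul_zero])), pow_add]
    _ ≤ k * (b ^ (2 * p) * m) := by
          apply Nat.mul_le_mul
          · exact Nat.le_of_dvd (by omega) pow_padicValNat_dvd
          · exact myValBound p b m hp hb hm1
    _ ≤ b ^ (2 * p + 1) * m := by
          calc k * (b ^ (2 * p) * m) ≤ b * (b ^ (2 * p) * m) :=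
                Nat.mul_le_mul_right _ (by omega)
          _ = b ^ (2 * p + 1) * m := by ring
  have hsub : N.primeFactors ⊆ S := fun p hp =>
    hall i p (Nat.prime_of_mem_primeFactors hp) (Nat.dvd_of_mem_primeFactors hp)
  have hN2 : N = ∏ p ∈ S, p ^ N.factorization p := by
    calc N = N.factorization.prod (· ^ ·) := (Nat.factorization_prod_pow_eq_self hNpos.ne').symm
    _ = ∏ p ∈ N.primeFactors, p ^ N.factorization p := by
        rw [Finsupp.prod, Nat.support_factorization]
    _ = ∏ p ∈ S, p ^ N.factorization p := by
        apply Finset.prod_subset hsub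
        intro p _ hp
        have h0 : N.factorization p = 0 := by
          rwa [← Nat.support_factorization, Finsupp.notMem_support_iff] at hp
        rw [h0, pow_zero]
  have hup : N ≤ C * m ^ s := by
    rw [hN2]
    calc ∏ p ∈ S, p ^ N.factorization p ≤ ∏ p ∈ S, (b ^ (2 * p + 1) * m) :=
          Finset.prod_le_prod' hfac
    _ = C * m ^ s := by rw [Finset.prod_mul_distrib, Finset.prod_const, hC, hs]
  have := hM m hmM
  omega
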